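/- In the hyperfine Hamiltonian restricted to the subspace with L total down spins (electron plus nuclei), the off-diagonal flip-flop perturbation V = Σ_j (A_j/2)(S₊I_{j−} + S₋I_{j+}) satisfies ‖Π_↑ V Π_↓‖₂ ≤ (ħ²/2)·√(A[L]·A[N−L+1]), where A[k] denotes the sum of the k largest hyperfine coupling constants A_j and Π_↑, Π_↓ project onto electron-spin-up and electron-spin-down states. In particular ‖Π_↑VΠ_↓‖₂ ≤ (ħ²/2)·A_max with A_max = Σ_j A_j. -/

import Mathlib

open Matrix Finset

/-- Basis states of one electron (first component, `true` = up) and `N`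
nuclear spin-1/2's. -/
abbrev SpinConfig (N : ℕ) := Bool × (Fin N → Bool)

/-- The flip-flop perturbation `V = Σ_j (A_j/2)(S₊I_{j−} + S₋I_{j+})` as a
matrix in the product basis (matrix element `hbar²A_j/2` for flipping the
electron together with nucleus `j`). -/
noncomputable def flipFlopV (N : ℕ) (hbar : ℝ) (A : Fin N → ℝ) :
    Matrix (SpinConfig N) (SpinConfig N) ℂ := fun p q =>
  ∑ j, ((A j : ℂ) / 2) *
    ((if p.1 = true ∧ q.1 = false ∧ q.2 j = true ∧
          p.2 = Function.update q.2 j false then ((hbar : ℂ) ^ 2) else 0)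
     + (if p.1 = false ∧ q.1 = true ∧ q.2 j = false ∧
          p.2 = Function.update q.2 j true then ((hbar : ℂ) ^ 2) else 0))

/-- Number of down (`false`) nuclear spins in a configuration. -/
def downCount {N : ℕ} (σ : Fin N → Bool) : ℕ :=
  (Finset.univ.filter fun j => σ j = false).card

namespace FlipFlopAux

variable {N : ℕ}

lemma filter_update_true (σ : Fin N → Bool) (j : Fin N) (h : σ j = false) :
    (univ.filter fun i => Function.update σ j true i = false)
      = (univ.filter fun i => σ i = false).erase j := by
  ext i
  by_cases hij : i = j
  · subst hij; simp [Function.update_self]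
  · simp [Function.update_of_ne hij, hij]

lemma downCount_update_true (σ : Fin N → Bool) (j : Fin N) (h : σ j = false) :
    downCount (Function.update σ j true) + 1 = downCount σ := by
  have hj : j ∈ univ.filter fun i => σ i = false := by simp [h]
  unfold downCount
  rw [filter_update_true σ j h, Finset.card_erase_of_mem hj]
  have : 1 ≤ (univ.filter fun i => σ i = false).card := Finset.card_pos.2 ⟨j, hj⟩
  omega

lemma card_true_filter (σ : Fin N → Bool) :
    (univ.filter fun i => σ i = true).card = N - downCount σ := by
  have h : (univ.filter fun i => σ i = true) = univ \ (univ.filter fun i => σ i = false) := by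
    ext i
    simp [Bool.not_eq_false]
  rw [h, Finset.card_sdiff_of_subset (Finset.filter_subset _ _)]
  simp [downCount]

end FlipFlopAux

open FlipFlopAux in
lemma flip_flop_key (N L : ℕ) (hL1 : 1 ≤ L)
    (hbar : ℝ) (A : Fin N → ℝ) (hA : ∀ j, 0 ≤ A j)
    (AL AR : ℝ) (hAL0 : 0 ≤ AL) (hAR0 : 0 ≤ AR)
    (hAL : ∀ s : Finset (Fin N), s.card = L → ∑ j ∈ s, A j ≤ AL)
    (hAR : ∀ s : Finset (Fin N), s.card = N - L + 1 → ∑ j ∈ s, A j ≤ AR)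
    (x : SpinConfig N → ℂ)
    (hsupp : ∀ q, x q ≠ 0 → q.1 = false ∧ downCount q.2 = L - 1) :
    Real.sqrt (∑ p, ‖(flipFlopV N hbar A).mulVec x p‖ ^ 2) ≤
        hbar ^ 2 / 2 * Real.sqrt (AL * AR) * Real.sqrt (∑ q, ‖x q‖ ^ 2) := by
  classical
  set c : ℝ := hbar ^ 2 / 2 with hc
  have hc0 : 0 ≤ c := by positivity
  set w : SpinConfig N → SpinConfig N → Fin N → ℝ := fun p q j =>
    if q.1 = false ∧ downCount q.2 = L - 1 ∧ p.1 = true ∧ q.2 j = true ∧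
        p.2 = Function.update q.2 j false then c * A j else 0 with hw
  have hw0 : ∀ p q j, 0 ≤ w p q j := by
    intro p q j
    dsimp only [w]
    split
    · exact mul_nonneg hc0 (hA j)
    · exact le_refl 0
  -- Step 1 : rewrite the matrix-vector product using the weights
  have hstep1 : ∀ p, (flipFlopV N hbar A).mulVec x p
      = ∑ q, ∑ j, ((w p q j : ℝ) : ℂ) * x q := by
    intro p
    simp only [Matrix.mulVec, dotProduct]
    refine Finset.sum_congr rfl fun q _ => ?_
    by_cases hx : x q = 0
    · simp [hx]
    · obtain ⟨hq1, hq2⟩ := hsupp q hx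
      simp only [flipFlopV]
      rw [Finset.sum_mul]
      refine Finset.sum_congr rfl fun j _ => ?_
      dsimp only [w]
      have h2 : ¬(p.1 = false ∧ q.1 = true ∧ q.2 j = false ∧
          p.2 = Function.update q.2 j true) := by
        rintro ⟨-, h, -⟩
        simp [hq1] at h
      rw [if_neg h2, add_zero]
      by_cases hcond : p.1 = true ∧ q.2 j = true ∧ p.2 = Function.update q.2 j false
      · rw [if_pos ⟨hcond.1, hq1, hcond.2.1, hcond.2.2⟩,
          if_pos ⟨hq1, hq2, hcond.1, hcond.2.1, hcond.2.2⟩, hc]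
        push_cast
        ring
      · rw [if_neg fun h => hcond ⟨h.1, h.2.2.1, h.2.2.2⟩,
          if_neg fun h => hcond ⟨h.2.2.1, h.2.2.2.1, h.2.2.2.2⟩]
        simp
  -- Step 2 : triangle inequality
  have hstep2 : ∀ p, ‖(flipFlopV N hbar A).mulVec x p‖
      ≤ ∑ e : SpinConfig N × Fin N, w p e.1 e.2 * ‖x e.1‖ := by
    intro p
    have hpt : (∑ e : SpinConfig N × Fin N, w p e.1 e.2 * ‖x e.1‖)
        = ∑ q : SpinConfig N, ∑ j, w p q j * ‖x q‖ := Fintype.sum_prod_type _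
    rw [hstep1 p, hpt]
    refine le_trans (norm_sum_le _ _) (Finset.sum_le_sum fun q _ => ?_)
    refine le_trans (norm_sum_le _ _) (le_of_eq (Finset.sum_congr rfl fun j _ => ?_))
    rw [norm_mul, Complex.norm_real, Real.norm_of_nonneg (hw0 p q j)]
  -- Step 3 : Cauchy-Schwarz per row
  have hstep3 : ∀ p, ‖(flipFlopV N hbar A).mulVec x p‖ ^ 2
      ≤ (∑ e : SpinConfig N × Fin N, w p e.1 e.2)
        * (∑ e : SpinConfig N × Fin N, w p e.1 e.2 * ‖x e.1‖ ^ 2) := by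
    intro p
    have hcs := Finset.sum_sq_le_sum_mul_sum_of_sq_eq_mul
      (univ : Finset (SpinConfig N × Fin N))
      (r := fun e => w p e.1 e.2 * ‖x e.1‖)
      (f := fun e => w p e.1 e.2)
      (g := fun e => w p e.1 e.2 * ‖x e.1‖ ^ 2)
      (fun e _ => hw0 p e.1 e.2)
      (fun e _ => mul_nonneg (hw0 p e.1 e.2) (sq_nonneg _))
      (fun e _ => by ring)
    exact le_trans (pow_le_pow_left₀ (norm_nonneg _) (hstep2 p) 2) hcs
  -- Step 4 : row sums
  have hrow : ∀ p, (∑ e : SpinConfig N × Fin N, w p e.1 e.2) ≤ c * AL := by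
    intro p
    have hpt : (∑ e : SpinConfig N × Fin N, w p e.1 e.2)
        = ∑ q : SpinConfig N, ∑ j, w p q j := Fintype.sum_prod_type _
    rw [hpt, Finset.sum_comm]
    have hcollapse : ∀ j, (∑ q : SpinConfig N, w p q j)
        = if p.1 = true ∧ p.2 j = false ∧
            downCount (Function.update p.2 j true) = L - 1 then c * A j else 0 := by
      intro j
      have hkey : ∀ q : SpinConfig N, w p q j =
          if q = ((false : Bool), Function.update p.2 j true) then
            (if p.1 = true ∧ p.2 j = false ∧
              downCount (Function.update p.2 j true) = L - 1 then c * A j else 0)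
          else 0 := by
        intro q
        dsimp only [w]
        by_cases hq : q = ((false : Bool), Function.update p.2 j true)
        · subst hq
          rw [if_pos rfl]
          refine if_congr ?_ rfl rfl
          constructor
          · rintro ⟨-, h2, h3, -, h5⟩
            refine ⟨h3, ?_, h2⟩
            rw [h5, Function.update_idem, Function.update_self]
          · rintro ⟨h1, h2, h3⟩
            refine ⟨rfl, h3, h1, Function.update_self _ _ _, ?_⟩
            rw [Function.update_idem, ← h2, Function.update_eq_self]
        · rw [if_neg hq, if_neg]
          rintro ⟨h1, -, -, h4, h5⟩
          refine hq (Prod.ext_iff.mpr ⟨h1, ?_⟩)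
          funext i
          show q.2 i = Function.update p.2 j true i
          by_cases hij : i = j
          · subst hij; rw [Function.update_self, h4]
          · rw [Function.update_of_ne hij]
            have h6 := congrFun h5 i
            rw [Function.update_of_ne hij] at h6
            exact h6.symm
      rw [Finset.sum_congr rfl fun q _ => hkey q, Finset.sum_ite_eq']
      simp
    rw [Finset.sum_congr rfl fun j _ => hcollapse j, ← Finset.sum_filter]
    by_cases hne : (univ.filter fun j => p.1 = true ∧ p.2 j = false ∧
        downCount (Function.update p.2 j true) = L - 1).Nonempty
    · obtain ⟨j₀, hj₀⟩ := hne
      rw [Finset.mem_filter] at hj₀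
      obtain ⟨-, -, h2, h3⟩ := hj₀
      have hdc := downCount_update_true p.2 j₀ h2
      have hcard : (univ.filter fun i => p.2 i = false).card = L := by
        have hd : downCount p.2 = L := by omega
        simpa [downCount] using hd
      rw [← Finset.mul_sum]
      refine mul_le_mul_of_nonneg_left ?_ hc0
      refine le_trans (Finset.sum_le_sum_of_subset_of_nonneg ?_ fun j _ _ => hA j)
        (hAL _ hcard)
      intro j hj
      rw [Finset.mem_filter] at hj ⊢
      exact ⟨hj.1, hj.2.2.1⟩
    · rw [Finset.not_nonempty_iff_eq_empty] at hne
      rw [hne, Finset.sum_empty]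
      exact mul_nonneg hc0 hAL0
  -- Step 5 : column sums
  have hcolb : ∀ q : SpinConfig N, (∑ p : SpinConfig N, ∑ j, w p q j) ≤ c * AR := by
    intro q
    rw [Finset.sum_comm]
    have hcollapse : ∀ j, (∑ p : SpinConfig N, w p q j)
        = if q.1 = false ∧ downCount q.2 = L - 1 ∧ q.2 j = true then c * A j else 0 := by
      intro j
      have hkey : ∀ p : SpinConfig N, w p q j =
          if p = ((true : Bool), Function.update q.2 j false) then
            (if q.1 = false ∧ downCount q.2 = L - 1 ∧ q.2 j = true then c * A j else 0)
          else 0 := by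
        intro p
        dsimp only [w]
        by_cases hp : p = ((true : Bool), Function.update q.2 j false)
        · subst hp
          rw [if_pos rfl]
          refine if_congr ?_ rfl rfl
          constructor
          · rintro ⟨h1, h2, -, h4, -⟩; exact ⟨h1, h2, h4⟩
          · rintro ⟨h1, h2, h3⟩; exact ⟨h1, h2, rfl, h3, rfl⟩
        · rw [if_neg hp, if_neg]
          rintro ⟨-, -, h3, -, h5⟩
          exact hp (Prod.ext_iff.mpr ⟨h3, h5⟩)
      rw [Finset.sum_congr rfl fun p _ => hkey p, Finset.sum_ite_eq']
      simp
    rw [Finset.sum_congr rfl fun j _ => hcollapse j, ← Finset.sum_filter]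
    by_cases hne : (univ.filter fun j => q.1 = false ∧ downCount q.2 = L - 1 ∧
        q.2 j = true).Nonempty
    · obtain ⟨j₀, hj₀⟩ := hne
      rw [Finset.mem_filter] at hj₀
      obtain ⟨-, -, h2, h3⟩ := hj₀
      have hGcard := card_true_filter q.2
      have hj₀G : j₀ ∈ univ.filter fun i => q.2 i = true := by simp [h3]
      have hG1 : 1 ≤ (univ.filter fun i => q.2 i = true).card :=
        Finset.card_pos.2 ⟨j₀, hj₀G⟩
      have hcard : (univ.filter fun i => q.2 i = true).card = N - L + 1 := by
        have hdc : downCount q.2 ≤ N := by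
          have := Finset.card_filter_le (univ : Finset (Fin N)) fun i => q.2 i = false
          simpa [downCount] using this
        omega
      rw [← Finset.mul_sum]
      refine mul_le_mul_of_nonneg_left ?_ hc0
      refine le_trans (Finset.sum_le_sum_of_subset_of_nonneg ?_ fun j _ _ => hA j)
        (hAR _ hcard)
      intro j hj
      rw [Finset.mem_filter] at hj ⊢
      exact ⟨hj.1, hj.2.2.2⟩
    · rw [Finset.not_nonempty_iff_eq_empty] at hne
      rw [hne, Finset.sum_empty]
      exact mul_nonneg hc0 hAR0
  -- Step 6 : assemble
  have main : (∑ p, ‖(flipFlopV N hbar A).mulVec x p‖ ^ 2)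
      ≤ c ^ 2 * (AL * AR) * ∑ q, ‖x q‖ ^ 2 := by
    calc (∑ p, ‖(flipFlopV N hbar A).mulVec x p‖ ^ 2)
        ≤ ∑ p, (∑ e : SpinConfig N × Fin N, w p e.1 e.2)
            * (∑ e : SpinConfig N × Fin N, w p e.1 e.2 * ‖x e.1‖ ^ 2) :=
          Finset.sum_le_sum fun p _ => hstep3 p
      _ ≤ ∑ p, (c * AL) * (∑ e : SpinConfig N × Fin N, w p e.1 e.2 * ‖x e.1‖ ^ 2) :=
          Finset.sum_le_sum fun p _ => mul_le_mul_of_nonneg_right (hrow p)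
            (Finset.sum_nonneg fun e _ => mul_nonneg (hw0 p e.1 e.2) (sq_nonneg _))
      _ = (c * AL) * ∑ q, (∑ p : SpinConfig N, ∑ j, w p q j) * ‖x q‖ ^ 2 := by
          rw [← Finset.mul_sum]
          congr 1
          have h1 : ∀ p : SpinConfig N,
              (∑ e : SpinConfig N × Fin N, w p e.1 e.2 * ‖x e.1‖ ^ 2)
                = ∑ q : SpinConfig N, ∑ j, w p q j * ‖x q‖ ^ 2 :=
            fun p => Fintype.sum_prod_type _
          rw [Finset.sum_congr rfl fun p _ => h1 p, Finset.sum_comm]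
          refine Finset.sum_congr rfl fun q _ => ?_
          rw [Finset.sum_mul]
          exact Finset.sum_congr rfl fun p _ => (Finset.sum_mul _ _ _).symm
      _ ≤ (c * AL) * ∑ q, (c * AR) * ‖x q‖ ^ 2 := by
          refine mul_le_mul_of_nonneg_left
            (Finset.sum_le_sum fun q _ =>
              mul_le_mul_of_nonneg_right (hcolb q) (sq_nonneg _))
            (mul_nonneg hc0 hAL0)
      _ = c ^ 2 * (AL * AR) * ∑ q, ‖x q‖ ^ 2 := by
          rw [← Finset.mul_sum]; ring
  have hfinal := Real.sqrt_le_sqrt main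
  refine le_trans hfinal (le_of_eq ?_)
  rw [Real.sqrt_mul (mul_nonneg (sq_nonneg c) (mul_nonneg hAL0 hAR0)),
    Real.sqrt_mul (sq_nonneg c), Real.sqrt_sq hc0]


/-- norm bound on the off-diagonal block `Π_↑VΠ_↓` in the
subspace with `L` total down spins.  `AL` is any upper bound on the sums of
`L` of the couplings (hence in particular on `A[L]`, the sum of the `L`
largest) and `AR` any upper bound on sums of `N−L+1` of them; for every
vector `x` supported on electron-down states with `L` total down spins,
`‖Vx‖ = ‖Π_↑VΠ_↓x‖ ≤ (hbar²/2)√(AL·AR)‖x‖`, and in particular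
`‖Vx‖ ≤ (hbar²/2)·A_max·‖x‖` with `A_max = Σ_j A_j`. -/
theorem flip_flop_block_norm_bound
    (N L : ℕ) (hL1 : 1 ≤ L) (hLN : L ≤ N + 1)
    (hbar : ℝ) (A : Fin N → ℝ) (hA : ∀ j, 0 ≤ A j)
    (AL AR : ℝ)
    (hAL : ∀ s : Finset (Fin N), s.card = L → ∑ j ∈ s, A j ≤ AL)
    (hAR : ∀ s : Finset (Fin N), s.card = N - L + 1 → ∑ j ∈ s, A j ≤ AR)
    (x : SpinConfig N → ℂ)
    (hsupp : ∀ q, x q ≠ 0 → q.1 = false ∧ downCount q.2 = L - 1) :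
    Real.sqrt (∑ p, ‖(flipFlopV N hbar A).mulVec x p‖ ^ 2) ≤
        hbar ^ 2 / 2 * Real.sqrt (AL * AR) *
          Real.sqrt (∑ q, ‖x q‖ ^ 2) ∧
    Real.sqrt (∑ p, ‖(flipFlopV N hbar A).mulVec x p‖ ^ 2) ≤
        hbar ^ 2 / 2 * (∑ j, A j) * Real.sqrt (∑ q, ‖x q‖ ^ 2) := by
  have hAsum : (0:ℝ) ≤ ∑ j, A j := Finset.sum_nonneg fun j _ => hA j
  by_cases hLe : L ≤ N
  · have hAL0 : 0 ≤ AL := by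
      obtain ⟨s, -, hs⟩ := Finset.exists_subset_card_eq (s := (univ : Finset (Fin N))) (n := L)
        (by simpa using hLe)
      exact le_trans (Finset.sum_nonneg fun j _ => hA j) (hAL s hs)
    have hAR0 : 0 ≤ AR := by
      obtain ⟨s, -, hs⟩ := Finset.exists_subset_card_eq (s := (univ : Finset (Fin N))) (n := N - L + 1)
        (by simp; omega)
      exact le_trans (Finset.sum_nonneg fun j _ => hA j) (hAR s hs)
    refine ⟨flip_flop_key N L hL1 hbar A hA AL AR hAL0 hAR0 hAL hAR x hsupp, ?_⟩
    have h2 := flip_flop_key N L hL1 hbar A hA (∑ j, A j) (∑ j, A j) hAsum hAsum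
      (fun s _ => Finset.sum_le_sum_of_subset_of_nonneg (Finset.subset_univ s)
        fun j _ _ => hA j)
      (fun s _ => Finset.sum_le_sum_of_subset_of_nonneg (Finset.subset_univ s)
        fun j _ _ => hA j) x hsupp
    rwa [Real.sqrt_mul_self hAsum] at h2
  · -- here L = N + 1 and Vx = 0
    have hzero : ∀ p, (flipFlopV N hbar A).mulVec x p = 0 := by
      intro p
      simp only [Matrix.mulVec, dotProduct]
      refine Finset.sum_eq_zero fun q _ => ?_
      by_cases hx : x q = 0
      · rw [hx, mul_zero]
      · obtain ⟨hq1, hq2⟩ := hsupp q hx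
        have hall : ∀ i, q.2 i = false := by
          have hcard : (univ.filter fun i => q.2 i = false).card = N := by
            have : downCount q.2 = N := by omega
            simpa [downCount] using this
          have huniv : (univ.filter fun i => q.2 i = false) = univ :=
            Finset.eq_univ_of_card _ (by simpa using hcard)
          intro i
          have hi : i ∈ univ.filter fun i => q.2 i = false := by
            rw [huniv]; exact Finset.mem_univ i
          exact (Finset.mem_filter.mp hi).2
        have hVz : flipFlopV N hbar A p q = 0 := by
          simp only [flipFlopV]
          refine Finset.sum_eq_zero fun j _ => ?_
          rw [if_neg, if_neg]
          · simp
          · rintro ⟨-, h, -⟩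
            simp [hq1] at h
          · rintro ⟨-, -, h, -⟩
            simp [hall j] at h
        simp only [hVz, zero_mul]
    have hLHS : (∑ p, ‖(flipFlopV N hbar A).mulVec x p‖ ^ 2) = 0 :=
      Finset.sum_eq_zero fun p _ => by rw [hzero p, norm_zero]; exact zero_pow two_ne_zero
    rw [hLHS, Real.sqrt_zero]
    constructor
    · positivity
    · have h0 : (0:ℝ) ≤ hbar ^ 2 / 2 := by positivity
      exact mul_nonneg (mul_nonneg h0 hAsum) (Real.sqrt_nonneg _)
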